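/- With R = ℤ/pℤ[t,t⁻¹] (p > 1) and B = [[-t⁻¹,1,0],[0,1,0],[0,1,-t]]: if v ∈ R³ has all coordinates nonzero of equal lowest degree n (v ∈ X₂), then w = Bv satisfies ord(w₀) = n-1, ord(w₁) = n, and ord(w₂) = n; hence applying B once more, B²v lies in X₁ (first coordinate's lowest degree is n-2, at least 2 below the others). -/

import Mathlib

open LaurentPolynomial

/-- lowest degree of `f` is at least `n` (ord 0 = +∞). -/
def ordGE {R : Type*} [CommRing R] (f : LaurentPolynomial R) (n : ℤ) : Prop :=
  ∀ m : ℤ, m < n → f.coeff m = 0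

/-- lowest degree of `f` is exactly `n`. -/
def ordEq {R : Type*} [CommRing R] (f : LaurentPolynomial R) (n : ℤ) : Prop :=
  f.coeff n ≠ 0 ∧ ordGE f n

noncomputable def Bm (p : ℕ) : Matrix (Fin 3) (Fin 3) (LaurentPolynomial (ZMod p)) :=
  !![-T (-1), 1, 0;
     0, 1, 0;
     0, 1, -T 1]

lemma coeff_T_mul {p : ℕ} (k : ℤ) (f : LaurentPolynomial (ZMod p)) (m : ℤ) :
    ((T k * f : LaurentPolynomial (ZMod p))).coeff m = f.coeff (m - k) := by
  rw [T, AddMonoidAlgebra.coeff_single_mul_apply]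
  simp [neg_add_eq_sub]

lemma rowA {p : ℕ} [Fact (1 < p)] {f g : LaurentPolynomial (ZMod p)} {k : ℤ}
    (hf : ordEq f k) (hg : ordGE g k) :
    ordEq ((-T (-1)) * f + g) (k - 1) := by
  have : Fact (1 < p) := inferInstance
  constructor
  · have : ((-T (-1)) * f + g : LaurentPolynomial (ZMod p)).coeff (k - 1) = -(f.coeff k) + g.coeff (k - 1) := by
      rw [AddMonoidAlgebra.coeff_add, Finsupp.add_apply, neg_mul, AddMonoidAlgebra.coeff_neg, Finsupp.neg_apply, coeff_T_mul]
      ring_nf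
    rw [this, hg _ (by omega), add_zero, neg_ne_zero]
    exact hf.1
  · intro m hm
    rw [AddMonoidAlgebra.coeff_add, Finsupp.add_apply, neg_mul, AddMonoidAlgebra.coeff_neg, Finsupp.neg_apply, coeff_T_mul,
      hf.2 _ (by omega), hg _ (by omega), neg_zero, add_zero]

lemma rowC_ge {p : ℕ} {g h : LaurentPolynomial (ZMod p)} {k : ℤ}
    (hg : ordGE g k) (hh : ordGE h k) :
    ordGE (g + (-T 1) * h) k := by
  intro m hm
  rw [AddMonoidAlgebra.coeff_add, Finsupp.add_apply, neg_mul, AddMonoidAlgebra.coeff_neg, Finsupp.neg_apply, coeff_T_mul,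
    hg _ hm, hh _ (by omega), neg_zero, add_zero]

lemma rowC {p : ℕ} {g h : LaurentPolynomial (ZMod p)} {k : ℤ}
    (hg : ordEq g k) (hh : ordGE h k) :
    ordEq (g + (-T 1) * h) k := by
  refine ⟨?_, rowC_ge hg.2 hh⟩
  rw [AddMonoidAlgebra.coeff_add, Finsupp.add_apply, neg_mul, AddMonoidAlgebra.coeff_neg, Finsupp.neg_apply, coeff_T_mul,
    hh _ (by omega), neg_zero, add_zero]
  exact hg.1

/-- If all coordinates of v have the same finite lowest degree n (v ∈ X₂), then
Bv has lowest degrees (n-1, n, n); hence B²v lies in X₁. -/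
theorem B_on_X2 (p : ℕ) [Fact (1 < p)]
    (v : Fin 3 → LaurentPolynomial (ZMod p)) (n : ℤ)
    (h0 : ordEq (v 0) n) (h1 : ordEq (v 1) n) (h2 : ordEq (v 2) n) :
    (ordEq ((Bm p).mulVec v 0) (n - 1) ∧ ordEq ((Bm p).mulVec v 1) n ∧
      ordEq ((Bm p).mulVec v 2) n) ∧
    (ordEq (((Bm p) * (Bm p)).mulVec v 0) (n - 2) ∧
      ordGE (((Bm p) * (Bm p)).mulVec v 1) n ∧
      ordGE (((Bm p) * (Bm p)).mulVec v 2) n) := by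
  have e0 : (Bm p).mulVec v 0 = (-T (-1)) * v 0 + v 1 := by
    simp [Bm, Matrix.mulVec, dotProduct, Fin.sum_univ_three]
  have e1 : (Bm p).mulVec v 1 = v 1 := by
    simp [Bm, Matrix.mulVec, dotProduct, Fin.sum_univ_three]
  have e2 : (Bm p).mulVec v 2 = v 1 + (-T 1) * v 2 := by
    simp [Bm, Matrix.mulVec, dotProduct, Fin.sum_univ_three]
  have w0 : ordEq ((Bm p).mulVec v 0) (n - 1) := e0 ▸ rowA h0 h1.2
  have w1 : ordEq ((Bm p).mulVec v 1) n := e1 ▸ h1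
  have w2 : ordEq ((Bm p).mulVec v 2) n := e2 ▸ rowC h1 h2.2
  have key : ((Bm p) * (Bm p)).mulVec v = (Bm p).mulVec ((Bm p).mulVec v) :=
    (Matrix.mulVec_mulVec v (Bm p) (Bm p)).symm
  set w := (Bm p).mulVec v
  have f0 : (Bm p).mulVec w 0 = (-T (-1)) * w 0 + w 1 := by
    simp [Bm, Matrix.mulVec, dotProduct, Fin.sum_univ_three]
  have f1 : (Bm p).mulVec w 1 = w 1 := by
    simp [Bm, Matrix.mulVec, dotProduct, Fin.sum_univ_three]
  have f2 : (Bm p).mulVec w 2 = w 1 + (-T 1) * w 2 := by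
    simp [Bm, Matrix.mulVec, dotProduct, Fin.sum_univ_three]
  have hw1ge : ordGE (w 1) (n - 1) := fun m hm => w1.2 m (by omega)
  refine ⟨⟨w0, w1, w2⟩, ?_, ?_, ?_⟩
  · have hnn : n - 2 = n - 1 - 1 := by ring
    rw [key, f0, hnn]
    exact rowA w0 hw1ge
  · rw [key, f1]; exact w1.2
  · rw [key, f2]; exact rowC_ge w1.2 w2.2
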